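/- Consider the ODE system V' = α₁C*_V − δ_V V, C' = α_C C(1 − (C+C_V+C*_V)/K) − γ₁CV − δ_C C, C_V' = γ₁CV − (ν₁+δ_{CV})C_V, (C*_V)' = ν₁C_V − β₁C*_V with positive parameters and α_C < δ_C. If (V, C, C_V, C*_V) is a non-negative solution defined on [0,∞), then all four components tend to 0 as t → ∞. -/

import Mathlib

open Filter

theorem stmt_5 (α₁ δV αC K γ₁ δC ν₁ δCV β₁ : ℝ)
    (hα₁ : 0 < α₁) (hδV : 0 < δV) (hαC : 0 < αC) (hK : 0 < K) (hγ₁ : 0 < γ₁)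
    (hδC : 0 < δC) (hν₁ : 0 < ν₁) (hδCV : 0 < δCV) (hβ₁ : 0 < β₁)
    (hlt : αC < δC)
    (V C CV CVs : ℝ → ℝ)
    (hVpos : ∀ t ≥ 0, 0 ≤ V t) (hCpos : ∀ t ≥ 0, 0 ≤ C t)
    (hCVpos : ∀ t ≥ 0, 0 ≤ CV t) (hCVspos : ∀ t ≥ 0, 0 ≤ CVs t)
    (hV : ∀ t ≥ 0, HasDerivAt V (α₁ * CVs t - δV * V t) t)
    (hC : ∀ t ≥ 0, HasDerivAt C
      (αC * C t * (1 - (C t + CV t + CVs t) / K) - γ₁ * C t * V t - δC * C t) t)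
    (hCV : ∀ t ≥ 0, HasDerivAt CV (γ₁ * C t * V t - (ν₁ + δCV) * CV t) t)
    (hCVs : ∀ t ≥ 0, HasDerivAt CVs (ν₁ * CV t - β₁ * CVs t) t) :
    Tendsto V atTop (nhds 0) ∧ Tendsto C atTop (nhds 0) ∧
      Tendsto CV atTop (nhds 0) ∧ Tendsto CVs atTop (nhds 0) := by
  set d : ℝ := min 1 ((ν₁ + δCV) / (2 * ν₁)) with hd_def
  have hd0 : 0 < d := lt_min one_pos (by positivity)
  set a : ℝ := d * β₁ / (2 * α₁) with ha_def
  have ha0 : 0 < a := by positivity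
  set lam : ℝ := min (min δV (δC - αC)) (min ((ν₁ + δCV) / 2) (β₁ / 2)) with hlam_def
  have hlam0 : 0 < lam :=
    lt_min (lt_min hδV (by linarith)) (lt_min (by positivity) (by positivity))
  have hlam1 : lam ≤ δV := le_trans (min_le_left _ _) (min_le_left _ _)
  have hlam2 : lam ≤ δC - αC := le_trans (min_le_left _ _) (min_le_right _ _)
  have hlam3 : lam ≤ (ν₁ + δCV) / 2 := le_trans (min_le_right _ _) (min_le_left _ _)
  have hlam4 : lam ≤ β₁ / 2 := le_trans (min_le_right _ _) (min_le_right _ _)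
  have hdν : d * ν₁ ≤ (ν₁ + δCV) / 2 := by
    have h1 : d ≤ (ν₁ + δCV) / (2 * ν₁) := min_le_right _ _
    have h2 : (ν₁ + δCV) / (2 * ν₁) * ν₁ = (ν₁ + δCV) / 2 := by
      field_simp
    nlinarith
  have haα : a * α₁ = d * β₁ / 2 := by
    rw [ha_def]; field_simp
  set W : ℝ → ℝ := fun t => a * V t + C t + CV t + d * CVs t with hW_def
  set W' : ℝ → ℝ := fun t =>
      a * (α₁ * CVs t - δV * V t)
        + (αC * C t * (1 - (C t + CV t + CVs t) / K) - γ₁ * C t * V t - δC * C t)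
        + (γ₁ * C t * V t - (ν₁ + δCV) * CV t)
        + d * (ν₁ * CV t - β₁ * CVs t) with hW'_def
  have hWd : ∀ t ≥ 0, HasDerivAt W (W' t) t := fun t ht =>
    ((((hV t ht).const_mul a).add (hC t ht)).add (hCV t ht)).add ((hCVs t ht).const_mul d)
  have hWnn : ∀ t ≥ 0, 0 ≤ W t := fun t ht =>
    add_nonneg (add_nonneg (add_nonneg (mul_nonneg ha0.le (hVpos t ht)) (hCpos t ht))
      (hCVpos t ht)) (mul_nonneg hd0.le (hCVspos t ht))
  have hkey : ∀ t ≥ 0, W' t ≤ -lam * W t := by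
    intro t ht
    have hv := hVpos t ht
    have hc := hCpos t ht
    have hcv := hCVpos t ht
    have hcs := hCVspos t ht
    have hq : 0 ≤ αC * C t * ((C t + CV t + CVs t) / K) := by positivity
    have p1 : 0 ≤ a * V t * (δV - lam) :=
      mul_nonneg (mul_nonneg ha0.le hv) (by linarith)
    have p2 : 0 ≤ C t * (δC - αC - lam) := mul_nonneg hc (by linarith)
    have p3 : 0 ≤ CV t * ((ν₁ + δCV) / 2 - d * ν₁) := mul_nonneg hcv (by linarith)
    have p4 : 0 ≤ CV t * ((ν₁ + δCV) / 2 - lam) := mul_nonneg hcv (by linarith)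
    have p5 : 0 ≤ CVs t * (d * (β₁ / 2 - lam)) :=
      mul_nonneg hcs (mul_nonneg hd0.le (by linarith))
    simp only [hW'_def, hW_def]
    nlinarith [p1, p2, p3, p4, p5, hq, haα]
  set g : ℝ → ℝ := fun t => W t * Real.exp (lam * t) with hg_def
  have hgd : ∀ t ≥ 0, HasDerivAt g
      (W' t * Real.exp (lam * t) + W t * (Real.exp (lam * t) * lam)) t := by
    intro t ht
    have he : HasDerivAt (fun s => Real.exp (lam * s)) (Real.exp (lam * t) * lam) t := by
      simpa using (((hasDerivAt_id t).const_mul lam).exp)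
    exact (hWd t ht).mul he
  have hganti : AntitoneOn g (Set.Ici (0 : ℝ)) := by
    apply antitoneOn_of_deriv_nonpos (convex_Ici 0)
    · exact fun x hx => ((hgd x hx).continuousAt).continuousWithinAt
    · intro x hx
      rw [interior_Ici] at hx
      exact ((hgd x (le_of_lt hx)).differentiableAt).differentiableWithinAt
    · intro x hx
      rw [interior_Ici] at hx
      rw [(hgd x (le_of_lt hx)).deriv]
      have hk := hkey x (le_of_lt hx)
      have hWx := hWnn x (le_of_lt hx)
      have he := Real.exp_pos (lam * x)
      nlinarith
  have hWle : ∀ t ≥ 0, W t ≤ W 0 * Real.exp (-(lam * t)) := by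
    intro t ht
    have hg0 : g t ≤ g 0 := hganti Set.self_mem_Ici ht ht
    have : W t * Real.exp (lam * t) ≤ W 0 := by
      simpa [hg_def] using hg0
    calc W t = W t * Real.exp (lam * t) * Real.exp (-(lam * t)) := by
          rw [mul_assoc, ← Real.exp_add, add_neg_cancel, Real.exp_zero, mul_one]
      _ ≤ W 0 * Real.exp (-(lam * t)) :=
          mul_le_mul_of_nonneg_right this (Real.exp_nonneg _)
  have hbound : Tendsto (fun t => W 0 * Real.exp (-(lam * t))) atTop (nhds 0) := by
    have h1 : Tendsto (fun t : ℝ => lam * t) atTop atTop :=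
      Tendsto.const_mul_atTop hlam0 tendsto_id
    have h2 : Tendsto (fun t : ℝ => -(lam * t)) atTop atBot :=
      tendsto_neg_atTop_atBot.comp h1
    have h3 : Tendsto (fun t : ℝ => Real.exp (-(lam * t))) atTop (nhds 0) :=
      Real.tendsto_exp_atBot.comp h2
    simpa using h3.const_mul (W 0)
  have hWtend : Tendsto W atTop (nhds 0) := by
    apply tendsto_of_tendsto_of_tendsto_of_le_of_le' tendsto_const_nhds hbound
    · exact (eventually_ge_atTop 0).mono fun t ht => hWnn t ht
    · exact (eventually_ge_atTop 0).mono fun t ht => hWle t ht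
  have comp : ∀ (f : ℝ → ℝ) (e : ℝ), 0 < e → (∀ t ≥ 0, 0 ≤ f t) →
      (∀ t ≥ 0, e * f t ≤ W t) → Tendsto f atTop (nhds 0) := by
    intro f e he hfnn hfle
    have hub : Tendsto (fun t => e⁻¹ * W t) atTop (nhds 0) := by
      simpa using hWtend.const_mul e⁻¹
    apply tendsto_of_tendsto_of_tendsto_of_le_of_le' tendsto_const_nhds hub
    · exact (eventually_ge_atTop 0).mono fun t ht => hfnn t ht
    · refine (eventually_ge_atTop 0).mono fun t ht => ?_
      have := hfle t ht
      rw [← mul_le_mul_iff_right₀ he, ← mul_assoc, mul_inv_cancel₀ he.ne', one_mul]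
      exact this
  refine ⟨comp V a ha0 hVpos ?_, comp C 1 one_pos hCpos ?_, comp CV 1 one_pos hCVpos ?_,
    comp CVs d hd0 hCVspos ?_⟩ <;>
  · intro t ht
    have h1 := mul_nonneg ha0.le (hVpos t ht)
    have h2 := hCpos t ht
    have h3 := hCVpos t ht
    have h4 := mul_nonneg hd0.le (hCVspos t ht)
    simp only [hW_def]
    linarith
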